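/- Let λ₁ > 0, λ₂ > 0, α > 0 and θ ∈ [-1, 1], let D = λ₂α/(λ₁+λ₂α) + θλ₁·(2/(2λ₁+λ₂α) + 1/(λ₁+2λ₂α) - 2/(λ₁+λ₂α)), K = λ₁/D, let f^w(x) = K e^{-λ₁x}(1 - e^{-λ₂αx})(1 - θe^{-λ₂αx}(1 - 2e^{-λ₁x})) and F^w(x) = ∫₀^x f^w(t) dt. Then the hazard rate function h^w(x) = f^w(x)/(1 - F^w(x)) tends to 0 as x tends to 0 from the right. -/

import Mathlib

open MeasureTheory Filter Topology Real

theorem gwed_hazard_rate_limit_at_zero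
    (l₁ l₂ α θ : ℝ) (hl₁ : 0 < l₁) (hl₂ : 0 < l₂) (hα : 0 < α)
    (hθ : θ ∈ Set.Icc (-1 : ℝ) 1)
    (D K : ℝ)
    (hD : D = l₂ * α / (l₁ + l₂ * α)
        + θ * l₁ * (2 / (2 * l₁ + l₂ * α) + 1 / (l₁ + 2 * l₂ * α)
          - 2 / (l₁ + l₂ * α)))
    (hK : K = l₁ / D)
    (fw Fw : ℝ → ℝ)
    (hfw : ∀ x : ℝ, fw x = K * Real.exp (-l₁ * x) * (1 - Real.exp (-l₂ * α * x))
        * (1 - θ * Real.exp (-l₂ * α * x) * (1 - 2 * Real.exp (-l₁ * x))))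
    (hFw : ∀ x : ℝ, Fw x = ∫ t in (0 : ℝ)..x, fw t) :
    Tendsto (fun x => fw x / (1 - Fw x)) (nhdsWithin 0 (Set.Ioi 0)) (nhds 0) := by
  have hfw_eq : fw = fun x => K * Real.exp (-l₁ * x) * (1 - Real.exp (-l₂ * α * x))
      * (1 - θ * Real.exp (-l₂ * α * x) * (1 - 2 * Real.exp (-l₁ * x))) := funext hfw
  have hcontf : Continuous fw := by
    rw [hfw_eq]; continuity
  have hFw_eq : Fw = fun x => ∫ t in (0 : ℝ)..x, fw t := funext hFw
  have hcontF : Continuous Fw := by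
    rw [hFw_eq]
    exact intervalIntegral.continuous_primitive
      (fun a b => hcontf.intervalIntegrable a b) 0
  have hfw0 : fw 0 = 0 := by simp [hfw 0]
  have hFw0 : Fw 0 = 0 := by simp [hFw 0]
  have h : Tendsto (fun x => fw x / (1 - Fw x)) (nhds 0) (nhds 0) := by
    have h1 : Tendsto fw (nhds 0) (nhds 0) := by simpa [hfw0] using hcontf.tendsto 0
    have h2 : Tendsto (fun x => 1 - Fw x) (nhds 0) (nhds 1) := by
      have h2' := ((continuous_const : Continuous fun _ : ℝ => (1 : ℝ)).sub hcontF).tendsto 0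
      simp only [Pi.sub_apply, hFw0, sub_zero] at h2'
      exact h2'
    have h3 := h1.div h2 one_ne_zero
    rw [zero_div] at h3
    exact h3
  exact h.mono_left nhdsWithin_le_nhds
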